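/- The only rational number r such that there exist regular integers p, q with 1 ≤ p ≤ 3600, 1 ≤ q ≤ 3600, r = p/q and 12/5 < r < 1 + √2, is r = 3125/1296 (the sexagesimal number 2;24 40 33 20). -/
import Mathlib

/-- A positive integer is regular if it is of the form `2^a · 3^b · 5^c`. -/
def Regular (n : ℕ) : Prop := ∃ a b c : ℕ, n = 2 ^ a * 3 ^ b * 5 ^ c

def regList : List ℕ := [1, 2, 3, 4, 5, 6, 8, 9, 10, 12, 15, 16, 18, 20, 24, 25, 27, 30, 32, 36, 40, 45, 48, 50, 54, 60, 64, 72, 75, 80, 81, 90, 96, 100, 108, 120, 125, 128, 135, 144, 150, 160, 162, 180, 192, 200, 216, 225, 240, 243, 250, 256, 270, 288, 300, 320, 324, 360, 375, 384, 400, 405, 432, 450, 480, 486, 500, 512, 540, 576, 600, 625, 640, 648, 675, 720, 729, 750, 768, 800, 810, 864, 900, 960, 972, 1000, 1024, 1080, 1125, 1152, 1200, 1215, 1250, 1280, 1296, 1350, 1440, 1458, 1500, 1536, 1600, 1620, 1728, 1800, 1875, 1920, 1944, 2000, 2025, 2048, 2160, 2187, 2250, 2304, 2400, 2430, 2500, 2560,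 2592, 2700, 2880, 2916, 3000, 3072, 3125, 3200, 3240, 3375, 3456, 3600]

lemma mem_regList (n : ℕ) (h : Regular n) (h1 : 1 ≤ n) (h2 : n ≤ 3600) : n ∈ regList := by
  obtain ⟨a, b, c, rfl⟩ := h
  have ha : a ≤ 11 := by
    by_contra h
    push_neg at h
    have : 2 ^ 12 ≤ 2 ^ a := Nat.pow_le_pow_right (by norm_num) h
    have : 2 ^ a ≤ 2 ^ a * 3 ^ b * 5 ^ c := by
      calc 2 ^ a ≤ 2 ^ a * 3 ^ b := Nat.le_mul_of_pos_right _ (by positivity)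
        _ ≤ 2 ^ a * 3 ^ b * 5 ^ c := Nat.le_mul_of_pos_right _ (by positivity)
    omega
  have hb : b ≤ 7 := by
    by_contra h
    push_neg at h
    have h3 : 3 ^ 8 ≤ 3 ^ b := Nat.pow_le_pow_right (by norm_num) h
    have : 3 ^ b ≤ 2 ^ a * 3 ^ b * 5 ^ c := by
      calc 3 ^ b ≤ 2 ^ a * 3 ^ b := Nat.le_mul_of_pos_left _ (by positivity)
        _ ≤ 2 ^ a * 3 ^ b * 5 ^ c := Nat.le_mul_of_pos_right _ (by positivity)
    omega
  have hc : c ≤ 5 := by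
    by_contra h
    push_neg at h
    have h5 : 5 ^ 6 ≤ 5 ^ c := Nat.pow_le_pow_right (by norm_num) h
    have : 5 ^ c ≤ 2 ^ a * 3 ^ b * 5 ^ c := Nat.le_mul_of_pos_left _ (by positivity)
    omega
  have hall : ∀ a < 12, ∀ b < 8, ∀ c < 6,
      2 ^ a * 3 ^ b * 5 ^ c ≤ 3600 → 2 ^ a * 3 ^ b * 5 ^ c ∈ regList := by
    set_option synthInstance.maxSize 2000 in
    set_option synthInstance.maxHeartbeats 1000000 in
    set_option maxRecDepth 100000 in decide
  exact hall a (by omega) b (by omega) c (by omega) h2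

lemma key : ∀ p ∈ regList, ∀ q ∈ regList,
    12 * q < 5 * p → (p - q) ^ 2 < 2 * q ^ 2 → 1296 * p = 3125 * q := by
  set_option maxRecDepth 100000 in decide

/-- The only ratio `r = p/q` of regular integers `1 ≤ p, q ≤ 3600` lying
strictly between `12/5` and `1 + √2` is `3125/1296` (sexagesimal 2;24 40 33 20). -/
theorem unique_ratio_between :
    {r : ℚ | ∃ p q : ℕ, Regular p ∧ Regular q ∧ 1 ≤ p ∧ p ≤ 3600 ∧ 1 ≤ q ∧ q ≤ 3600 ∧
        r = (p : ℚ) / q ∧ 12 / 5 < (r : ℝ) ∧ (r : ℝ) < 1 + Real.sqrt 2} =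
    {3125 / 1296} := by
  ext r
  simp only [Set.mem_setOf_eq, Set.mem_singleton_iff]
  constructor
  · rintro ⟨p, q, hp, hq, hp1, hp2, hq1, hq2, rfl, hlo, hhi⟩
    have hqpos : (0:ℝ) < q := by exact_mod_cast hq1
    have hreal : ((((p:ℚ)/q : ℚ)) : ℝ) = (p:ℝ)/(q:ℝ) := by push_cast; ring
    rw [hreal] at hlo hhi
    have h12 : 12 * q < 5 * p := by
      have := (div_lt_div_iff₀ (by norm_num) hqpos).mp hlo
      have : (12:ℝ) * q < 5 * p := by linarith
      exact_mod_cast this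
    have hpq : q < p := by omega
    have hsub : (p:ℝ) - q < q * Real.sqrt 2 := by
      have := (div_lt_iff₀ hqpos).mp hhi
      nlinarith
    have hsq : ((p:ℝ) - q) ^ 2 < 2 * q ^ 2 := by
      have h0 : (0:ℝ) ≤ (p:ℝ) - q := by
        have : (q:ℝ) ≤ p := by exact_mod_cast hpq.le
        linarith
      have hs2 : (q * Real.sqrt 2) ^ 2 = 2 * q ^ 2 := by
        rw [mul_pow, Real.sq_sqrt (by norm_num)]; ring
      nlinarith [Real.sqrt_nonneg 2, mul_pos hqpos (Real.sqrt_pos.mpr (by norm_num : (0:ℝ) < 2))]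
    have hsqn : (p - q) ^ 2 < 2 * q ^ 2 := by
      have hc : ((p - q : ℕ) : ℝ) = (p:ℝ) - q := by
        push_cast [Nat.cast_sub hpq.le]; ring
      have : (((p - q)^2 : ℕ) : ℝ) < ((2 * q ^ 2 : ℕ) : ℝ) := by push_cast [hc]; nlinarith
      exact_mod_cast this
    have hk := key p (mem_regList p hp hp1 hp2) q (mem_regList q hq hq1 hq2) h12 hsqn
    have hq0 : (q:ℚ) ≠ 0 := by exact_mod_cast hq1.trans_lt' (by norm_num) |>.ne' 
    field_simp
    have : (1296:ℚ) * p = 3125 * q := by exact_mod_cast hk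
    linarith
  · rintro rfl
    refine ⟨3125, 1296, ⟨0, 0, 5, by norm_num⟩, ⟨4, 4, 0, by norm_num⟩, by norm_num, by norm_num,
      by norm_num, by norm_num, by norm_num, ?_, ?_⟩
    · norm_num
    · have h : (1829 / 1296 : ℝ) < Real.sqrt 2 := by
        rw [Real.lt_sqrt (by norm_num)]
        norm_num
      push_cast
      linarith
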